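/- For every real δ with 0 < δ < 1 there exists a constant C such that for all natural numbers n ≥ C, m, c with 3c ≤ n − C and 2m + c ≤ 3n − C·log₂(n + 2), there exists a function T : B^n × B^n × B^n → B^n with the following property: for every A, B : B^n × B^n → Finset(B^m) with all values of cardinality at most 2^c and every F : B^m × B^m → Finset(B^n) with all values of cardinality at most 2^c, the number of triples (x,y,z) ∈ B^n × B^n × B^n for which there exist a ∈ A(x,y) and b ∈ B(y,z) with T(x,y,z) ∈ F(a,b) is less than δ·2^(3n). -/

import Mathlib

open Finset


/-- `BS k` is the set of binary strings of length `k`. -/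
abbrev BS (k : ℕ) := Fin k → Bool

lemma three_mul_le_two_pow (L : ℕ) (h : 6 ≤ L) : 3 * L + 24 ≤ 2 ^ L := by
  induction L with
  | zero => omega
  | succ p ih =>
    rcases Nat.lt_or_ge p 6 with h6 | h6
    · interval_cases p <;> simp_all <;> norm_num
    · have hp := ih h6
      have : (64 : ℕ) ≤ 2 ^ p := by
        calc (64:ℕ) = 2 ^ 6 := by norm_num
        _ ≤ 2 ^ p := Nat.pow_le_pow_right (by norm_num) h6
      rw [pow_succ]
      omega


lemma card_smallSets {α : Type*} [Fintype α] [DecidableEq α] (k : ℕ) :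
    ((univ : Finset (Finset α)).filter (fun s => s.card ≤ k)).card
      ≤ (Fintype.card α + 1) ^ k := by
  classical
  have key : ∀ u : Finset α, u.card ≤ k → ∀ a : α,
      (a ∈ u ↔ ∃ i : Fin k, u.toList[(i : ℕ)]? = some a) := by
    intro u hu a
    constructor
    · intro ha
      have ha' : a ∈ u.toList := Finset.mem_toList.mpr ha
      obtain ⟨i, hi, hgi⟩ := List.getElem_of_mem ha'
      have hlen : u.toList.length = u.card := Finset.length_toList u
      refine ⟨⟨i, by omega⟩, ?_⟩
      rw [List.getElem?_eq_getElem hi, hgi]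
    · rintro ⟨i, hi⟩
      have : a ∈ u.toList := List.mem_of_getElem? hi
      exact Finset.mem_toList.mp this
  calc ((univ : Finset (Finset α)).filter (fun s => s.card ≤ k)).card
      ≤ (univ : Finset (Fin k → Option α)).card := by
        apply Finset.card_le_card_of_injOn (fun (s : Finset α) (i : Fin k) => s.toList[(i : ℕ)]?)
          (fun s _ => mem_univ _)
        intro s hs t ht hst
        simp only [coe_filter, Set.mem_setOf_eq, mem_univ, true_and] at hs ht
        ext a
        rw [key s hs a, key t ht a]
        have hst' : ∀ i : Fin k, s.toList[(i:ℕ)]? = t.toList[(i:ℕ)]? :=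
          fun i => congrFun hst i
        constructor
        · rintro ⟨i, hi⟩; exact ⟨i, (hst' i).symm.trans hi⟩
        · rintro ⟨i, hi⟩; exact ⟨i, (hst' i).trans hi⟩
    _ = (Fintype.card α + 1) ^ k := by simp [Finset.card_univ]


lemma choose_le_two_pow (n k : ℕ) : n.choose k ≤ 2 ^ n := by
  rcases le_or_gt k n with h | h
  · calc n.choose k ≤ ∑ i ∈ Finset.range (n+1), n.choose i :=
        Finset.single_le_sum (fun i _ => Nat.zero_le _) (Finset.mem_range.mpr (by omega))
    _ = 2 ^ n := Nat.sum_range_choose n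
  · simp [Nat.choose_eq_zero_of_lt h]

lemma bad_count {I V : Type*} [Fintype I] [DecidableEq I] [Fintype V] [DecidableEq V]
    (S : I → Finset V) (D K : ℕ) (hS : ∀ w, (S w).card ≤ D) (hK : K ≤ Fintype.card I) :
    ((univ : Finset (I → V)).filter
        (fun T => K ≤ (univ.filter (fun w => T w ∈ S w)).card)).card
      ≤ 2 ^ Fintype.card I * (D ^ K * Fintype.card V ^ (Fintype.card I - K)) := by
  classical
  have hsub : ((univ : Finset (I → V)).filter
        (fun T => K ≤ (univ.filter (fun w => T w ∈ S w)).card))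
      ⊆ ((univ : Finset I).powersetCard K).biUnion
          (fun W => Fintype.piFinset (fun w => if w ∈ W then S w else univ)) := by
    intro T hT
    rw [mem_filter] at hT
    obtain ⟨W, hWsub, hWcard⟩ := Finset.exists_subset_card_eq hT.2
    refine mem_biUnion.mpr ⟨W, ?_, ?_⟩
    · exact mem_powersetCard.mpr ⟨subset_univ _, hWcard⟩
    · rw [Fintype.mem_piFinset]
      intro w
      by_cases hw : w ∈ W
      · simpa [hw] using (mem_filter.mp (hWsub hw)).2
      · simp [hw]
  calc _ ≤ _ := Finset.card_le_card hsub
    _ ≤ ∑ W ∈ (univ : Finset I).powersetCard K,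
        (Fintype.piFinset (fun w => if w ∈ W then S w else univ)).card :=
      Finset.card_biUnion_le
    _ ≤ ((univ : Finset I).powersetCard K).card *
        (D ^ K * Fintype.card V ^ (Fintype.card I - K)) := by
      rw [← smul_eq_mul]
      apply Finset.sum_le_card_nsmul
      intro W hW
      rw [mem_powersetCard] at hW
      rw [Fintype.card_piFinset]
      have : ∀ w : I, ((if w ∈ W then S w else univ) : Finset V).card
          = if w ∈ W then (S w).card else Fintype.card V := by
        intro w; split <;> simp [Finset.card_univ]
      simp only [this]
      rw [← Finset.prod_sdiff (Finset.subset_univ W)]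
      have h1 : ∏ w ∈ W, (if w ∈ W then (S w).card else Fintype.card V) ≤ D ^ K := by
        rw [← hW.2]
        apply Finset.prod_le_pow_card
        intro w hw; simp [hw, hS w]
      have h2 : ∏ w ∈ (univ \ W), (if w ∈ W then (S w).card else Fintype.card V)
          ≤ Fintype.card V ^ (Fintype.card I - K) := by
        have := Finset.prod_le_pow_card (univ \ W)
          (fun w => if w ∈ W then (S w).card else Fintype.card V) (Fintype.card V) ?_
        · calc _ ≤ _ := this
          _ = Fintype.card V ^ (Fintype.card I - K) := by
            rw [Finset.card_sdiff_of_subset (subset_univ W), Finset.card_univ, hW.2]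
        · intro w hw
          rw [mem_sdiff] at hw
          simp [hw.2]
      calc (∏ w ∈ (univ \ W), if w ∈ W then (S w).card else Fintype.card V) *
            (∏ w ∈ W, if w ∈ W then (S w).card else Fintype.card V)
          ≤ Fintype.card V ^ (Fintype.card I - K) * D ^ K := Nat.mul_le_mul h2 h1
        _ = D ^ K * Fintype.card V ^ (Fintype.card I - K) := Nat.mul_comm _ _
    _ ≤ 2 ^ Fintype.card I * (D ^ K * Fintype.card V ^ (Fintype.card I - K)) := by
      apply Nat.mul_le_mul_right
      rw [Finset.card_powersetCard, Finset.card_univ]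
      exact choose_le_two_pow _ _

/-- For every `0 < δ < 1` there is a constant `C` such that for all `n ≥ C`, `m`, `c`
with `3c ≤ n - C` and `2m + c ≤ 3n - C·log₂(n+2)`, there is a function
`T : B^n × B^n × B^n → B^n` such that for all multi-valued `A, B, F` with values of
cardinality at most `2^c`, fewer than `δ·2^(3n)` triples `(x,y,z)` admit a
decomposition, i.e. have some `a ∈ A(x,y)`, `b ∈ B(y,z)` with `T(x,y,z) ∈ F(a,b)`. -/
theorem exists_function_mostly_uncovered (δ : ℝ) (hδ0 : 0 < δ) (hδ1 : δ < 1) :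
    ∃ C : ℕ, ∀ n m c : ℕ, C ≤ n → 3 * c ≤ n - C →
      2 * m + c ≤ 3 * n - C * Nat.log 2 (n + 2) →
      ∃ T : BS n → BS n → BS n → BS n,
        ∀ (A B : BS n → BS n → Finset (BS m)) (F : BS m → BS m → Finset (BS n)),
          (∀ x y, (A x y).card ≤ 2 ^ c) →
          (∀ y z, (B y z).card ≤ 2 ^ c) →
          (∀ a b, (F a b).card ≤ 2 ^ c) →
          ((Finset.univ.filter (fun w : BS n × BS n × BS n =>
              ∃ a ∈ A w.1 w.2.1, ∃ b ∈ B w.2.1 w.2.2,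
                T w.1 w.2.1 w.2.2 ∈ F a b)).card : ℝ) < δ * 2 ^ (3 * n) := by
  classical
  refine ⟨max 62 ⌈2/δ⌉₊, ?_⟩
  intro n m c hCn h3c hmc
  set C : ℕ := max 62 ⌈2/δ⌉₊ with hCdef
  -- basic numeric facts
  have hC62 : 62 ≤ C := le_max_left _ _
  have hn62 : 62 ≤ n := le_trans hC62 hCn
  have hCδ : (2:ℝ)/δ ≤ (C:ℕ) := by
    calc (2:ℝ)/δ ≤ (⌈2/δ⌉₊ : ℝ) := Nat.le_ceil _
    _ ≤ (C : ℝ) := by exact_mod_cast le_max_right 62 ⌈2/δ⌉₊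
  set N : ℕ := 2 ^ (3 * n) with hNdef
  have hN1 : 1 ≤ N := Nat.one_le_two_pow
  set K : ℕ := ⌈δ * (N : ℝ)⌉₊ with hKdef
  have hNpos : (0:ℝ) < (N:ℝ) := by positivity
  have hK1 : 1 ≤ K := by
    rw [hKdef]
    exact Nat.one_le_iff_ne_zero.mpr (by
      simp only [ne_eq, Nat.ceil_eq_zero, not_le]
      positivity)
  have hKN : K ≤ N := by
    rw [hKdef]
    apply Nat.ceil_le.mpr
    nlinarith
  have hCK : 2 * N ≤ C * K := by
    have h1 : (2:ℝ) * N ≤ (C:ℝ) * (K:ℝ) := by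
      have hK' : δ * (N:ℝ) ≤ (K:ℝ) := Nat.le_ceil _
      have h2 : (2:ℝ) * N = (2/δ) * (δ * N) := by field_simp
      rw [h2]
      apply mul_le_mul hCδ hK' (by positivity) (by positivity)
    exact_mod_cast h1
  -- log facts
  set L : ℕ := Nat.log 2 (n + 2) with hLdef
  have hLpow : 2 ^ L ≤ n + 2 := Nat.pow_log_le_self 2 (by omega)
  have hL6 : 6 ≤ L := by
    rw [hLdef]
    exact (Nat.le_log_iff_pow_le (by norm_num) (by omega)).mpr (by norm_num; omega)
  have hLn : 3 * L + 24 ≤ n + 2 := le_trans (three_mul_le_two_pow L hL6) hLpow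
  have hnL : n + 1 ≤ 2 ^ (L + 1) := by
    have := Nat.lt_pow_succ_log_self (b := 2) (by norm_num) (n + 2)
    rw [← hLdef] at this
    omega
  have hCL : 62 * L ≤ C * L := Nat.mul_le_mul_right L hC62
  -- cardinalities
  have hVcard : Fintype.card (BS n) = 2 ^ n := by simp [Fintype.card_fun]
  have hIcard : Fintype.card (BS n × BS n × BS n) = N := by
    rw [Fintype.card_prod, Fintype.card_prod, hVcard, hNdef,
      show 3 * n = n + (n + n) by ring, pow_add, pow_add]
  -- candidate sets
  set SmallA : Finset (Finset (BS m)) :=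
    (univ : Finset (Finset (BS m))).filter (fun s => s.card ≤ 2 ^ c) with hSmallA
  set SmallF : Finset (Finset (BS n)) :=
    (univ : Finset (Finset (BS n))).filter (fun s => s.card ≤ 2 ^ c) with hSmallF
  set Acands : Finset (BS n → BS n → Finset (BS m)) :=
    Fintype.piFinset (fun _ => Fintype.piFinset (fun _ => SmallA)) with hAcands
  set Fcands : Finset (BS m → BS m → Finset (BS n)) :=
    Fintype.piFinset (fun _ => Fintype.piFinset (fun _ => SmallF)) with hFcands
  -- induced bad-value multifunction
  set Sfun : (BS n → BS n → Finset (BS m)) → (BS n → BS n → Finset (BS m)) →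
      (BS m → BS m → Finset (BS n)) → (BS n × BS n × BS n) → Finset (BS n) :=
    fun A B F w => (A w.1 w.2.1).biUnion (fun a => (B w.2.1 w.2.2).biUnion (fun b => F a b))
    with hSfun
  set Bad : Finset ((BS n × BS n × BS n) → BS n) :=
    (Acands ×ˢ Acands ×ˢ Fcands).biUnion (fun p =>
      (univ : Finset ((BS n × BS n × BS n) → BS n)).filter
        (fun T => K ≤ (univ.filter (fun w => T w ∈ Sfun p.1 p.2.1 p.2.2 w)).card)) with hBad
  -- bound on Bad.card
  have hSfun_card : ∀ p ∈ Acands ×ˢ Acands ×ˢ Fcands,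
      ∀ w, (Sfun p.1 p.2.1 p.2.2 w).card ≤ 2 ^ (n - C) := by
    intro p hp w
    rw [mem_product, mem_product] at hp
    obtain ⟨hpA, hpB, hpF⟩ := hp
    have hA : ∀ x y, (p.1 x y).card ≤ 2 ^ c := by
      intro x y
      have := Fintype.mem_piFinset.mp (Fintype.mem_piFinset.mp hpA x) y
      exact (mem_filter.mp this).2
    have hB : ∀ x y, (p.2.1 x y).card ≤ 2 ^ c := by
      intro x y
      have := Fintype.mem_piFinset.mp (Fintype.mem_piFinset.mp hpB x) y
      exact (mem_filter.mp this).2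
    have hF : ∀ x y, (p.2.2 x y).card ≤ 2 ^ c := by
      intro x y
      have := Fintype.mem_piFinset.mp (Fintype.mem_piFinset.mp hpF x) y
      exact (mem_filter.mp this).2
    calc (Sfun p.1 p.2.1 p.2.2 w).card
        ≤ ∑ a ∈ p.1 w.1 w.2.1, ((p.2.1 w.2.1 w.2.2).biUnion (fun b => p.2.2 a b)).card :=
          Finset.card_biUnion_le
      _ ≤ (p.1 w.1 w.2.1).card * (2 ^ c * 2 ^ c) := by
          rw [← smul_eq_mul]
          apply Finset.sum_le_card_nsmul
          intro a _
          calc ((p.2.1 w.2.1 w.2.2).biUnion (fun b => p.2.2 a b)).card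
              ≤ ∑ b ∈ p.2.1 w.2.1 w.2.2, (p.2.2 a b).card := Finset.card_biUnion_le
            _ ≤ (p.2.1 w.2.1 w.2.2).card * 2 ^ c := by
                rw [← smul_eq_mul]
                exact Finset.sum_le_card_nsmul _ _ _ (fun b _ => hF a b)
            _ ≤ 2 ^ c * 2 ^ c := Nat.mul_le_mul_right _ (hB _ _)
      _ ≤ 2 ^ c * (2 ^ c * 2 ^ c) := Nat.mul_le_mul_right _ (hA _ _)
      _ = 2 ^ (3 * c) := by rw [← pow_add, ← pow_add]; ring_nf
      _ ≤ 2 ^ (n - C) := Nat.pow_le_pow_right (by norm_num) h3c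
  have hBadBound : Bad.card ≤ (Acands.card * (Acands.card * Fcands.card)) *
      (2 ^ N * ((2 ^ (n - C)) ^ K * (2 ^ n) ^ (N - K))) := by
    calc Bad.card ≤ ∑ p ∈ Acands ×ˢ Acands ×ˢ Fcands,
        ((univ : Finset ((BS n × BS n × BS n) → BS n)).filter
          (fun T => K ≤ (univ.filter (fun w => T w ∈ Sfun p.1 p.2.1 p.2.2 w)).card)).card :=
        Finset.card_biUnion_le
      _ ≤ (Acands ×ˢ Acands ×ˢ Fcands).card *
          (2 ^ N * ((2 ^ (n - C)) ^ K * (2 ^ n) ^ (N - K))) := by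
          rw [← smul_eq_mul]
          apply Finset.sum_le_card_nsmul
          intro p hp
          have := bad_count (Sfun p.1 p.2.1 p.2.2) (2 ^ (n - C)) K
            (hSfun_card p hp) (by rw [hIcard]; exact hKN)
          rw [hIcard, hVcard] at this
          exact this
      _ = (Acands.card * (Acands.card * Fcands.card)) *
          (2 ^ N * ((2 ^ (n - C)) ^ K * (2 ^ n) ^ (N - K))) := by
          rw [Finset.card_product, Finset.card_product]
  -- candidate counts
  have hBSm : Fintype.card (BS m) = 2 ^ m := by simp [Fintype.card_fun]
  have hSmallAcard : SmallA.card ≤ 2 ^ ((m + 1) * 2 ^ c) := by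
    calc SmallA.card ≤ (Fintype.card (BS m) + 1) ^ (2 ^ c) := card_smallSets _
      _ ≤ (2 ^ (m + 1)) ^ (2 ^ c) := by
          apply Nat.pow_le_pow_left
          rw [hBSm, pow_succ]
          have : 1 ≤ 2 ^ m := Nat.one_le_two_pow
          omega
      _ = 2 ^ ((m + 1) * 2 ^ c) := by rw [← pow_mul]
  have hSmallFcard : SmallF.card ≤ 2 ^ ((n + 1) * 2 ^ c) := by
    calc SmallF.card ≤ (Fintype.card (BS n) + 1) ^ (2 ^ c) := card_smallSets _
      _ ≤ (2 ^ (n + 1)) ^ (2 ^ c) := by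
          apply Nat.pow_le_pow_left
          rw [hVcard, pow_succ]
          have : 1 ≤ 2 ^ n := Nat.one_le_two_pow
          omega
      _ = 2 ^ ((n + 1) * 2 ^ c) := by rw [← pow_mul]
  have hAcard : Acands.card ≤ 2 ^ ((m + 1) * 2 ^ (c + 2 * n)) := by
    have heq : Acands.card = SmallA.card ^ (2 ^ n * 2 ^ n) := by
      rw [hAcands, Fintype.card_piFinset]
      simp only [Fintype.card_piFinset, Finset.prod_const, Finset.card_univ, hVcard]
      rw [← pow_mul]
    rw [heq]
    calc SmallA.card ^ (2 ^ n * 2 ^ n) ≤ (2 ^ ((m + 1) * 2 ^ c)) ^ (2 ^ n * 2 ^ n) :=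
        Nat.pow_le_pow_left hSmallAcard _
      _ = 2 ^ ((m + 1) * 2 ^ (c + 2 * n)) := by
          rw [← pow_mul, mul_assoc]
          congr 2
          rw [← pow_add, ← pow_add]
          congr 1
          ring
  have hFcard : Fcands.card ≤ 2 ^ ((n + 1) * 2 ^ (2 * m + c)) := by
    have heq : Fcands.card = SmallF.card ^ (2 ^ m * 2 ^ m) := by
      rw [hFcands, Fintype.card_piFinset]
      simp only [Fintype.card_piFinset, Finset.prod_const, Finset.card_univ, hBSm]
      rw [← pow_mul]
    rw [heq]
    calc SmallF.card ^ (2 ^ m * 2 ^ m) ≤ (2 ^ ((n + 1) * 2 ^ c)) ^ (2 ^ m * 2 ^ m) :=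
        Nat.pow_le_pow_left hSmallFcard _
      _ = 2 ^ ((n + 1) * 2 ^ (2 * m + c)) := by
          rw [← pow_mul, mul_assoc]
          congr 2
          rw [← pow_add, ← pow_add]
          congr 1
          ring
  -- exponent bounds
  have hm2 : m + 1 ≤ 2 ^ (L + 2) := by
    have h2m : 2 * m + c ≤ 3 * n := le_trans hmc (Nat.sub_le _ _)
    have : m + 1 ≤ 2 * (n + 1) := by omega
    calc m + 1 ≤ 2 * (n + 1) := this
      _ ≤ 2 * 2 ^ (L + 1) := by omega
      _ = 2 ^ (L + 2) := by rw [pow_succ]; ring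
  have hEA : (m + 1) * 2 ^ (c + 2 * n) ≤ 2 ^ (3 * n - 3) := by
    calc (m + 1) * 2 ^ (c + 2 * n) ≤ 2 ^ (L + 2) * 2 ^ (c + 2 * n) :=
        Nat.mul_le_mul_right _ hm2
      _ = 2 ^ (L + 2 + (c + 2 * n)) := by rw [← pow_add]
      _ ≤ 2 ^ (3 * n - 3) := by
          apply Nat.pow_le_pow_right (by norm_num)
          omega
  have hEF : (n + 1) * 2 ^ (2 * m + c) ≤ 2 ^ (3 * n - 2) := by
    have hn2 : n + 1 ≤ 2 ^ (L + 1) := hnL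
    calc (n + 1) * 2 ^ (2 * m + c) ≤ 2 ^ (L + 1) * 2 ^ (2 * m + c) :=
        Nat.mul_le_mul_right _ hn2
      _ = 2 ^ (L + 1 + (2 * m + c)) := by rw [← pow_add]
      _ ≤ 2 ^ (3 * n - 2) := by
          apply Nat.pow_le_pow_right (by norm_num)
          obtain ⟨cl, hcl⟩ : ∃ cl, C * L = cl := ⟨_, rfl⟩
          rw [hcl] at hmc hCL
          omega
  -- total candidate count bound
  have hP : Acands.card * (Acands.card * Fcands.card) ≤ 2 ^ (N - 1) := by
    have hsum : (m + 1) * 2 ^ (c + 2 * n) + ((m + 1) * 2 ^ (c + 2 * n)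
        + (n + 1) * 2 ^ (2 * m + c)) ≤ N - 1 := by
      have e1 : 2 ^ (3 * n - 3) + 2 ^ (3 * n - 3) = 2 ^ (3 * n - 2) := by
        rw [show 3 * n - 2 = (3 * n - 3) + 1 by omega, pow_succ]; ring
      have e2 : 2 ^ (3 * n - 2) + 2 ^ (3 * n - 2) = 2 ^ (3 * n - 1) := by
        rw [show 3 * n - 1 = (3 * n - 2) + 1 by omega, pow_succ]; ring
      have e3 : 2 ^ (3 * n - 1) + 2 ^ (3 * n - 1) = N := by
        have h : 2 ^ (3 * n - 1) + 2 ^ (3 * n - 1) = 2 ^ ((3 * n - 1) + 1) := by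
          rw [pow_succ]; ring
        rw [h, show (3 * n - 1) + 1 = 3 * n by omega]
      have e4 : 1 ≤ 2 ^ (3 * n - 1) := Nat.one_le_two_pow
      omega
    calc Acands.card * (Acands.card * Fcands.card)
        ≤ 2 ^ ((m + 1) * 2 ^ (c + 2 * n)) * (2 ^ ((m + 1) * 2 ^ (c + 2 * n))
            * 2 ^ ((n + 1) * 2 ^ (2 * m + c))) :=
          Nat.mul_le_mul hAcard (Nat.mul_le_mul hAcard hFcard)
      _ = 2 ^ ((m + 1) * 2 ^ (c + 2 * n) + ((m + 1) * 2 ^ (c + 2 * n)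
            + (n + 1) * 2 ^ (2 * m + c))) := by rw [← pow_add, ← pow_add]
      _ ≤ 2 ^ (N - 1) := Nat.pow_le_pow_right (by norm_num) hsum
  -- Bad is not everything
  have key : (N - 1) + (N + ((n - C) * K + n * (N - K))) < n * N := by
    obtain ⟨u, hu⟩ : ∃ u, (n - C) * K = u := ⟨_, rfl⟩
    obtain ⟨v, hv⟩ : ∃ v, C * K = v := ⟨_, rfl⟩
    obtain ⟨x, hx⟩ : ∃ x, n * (N - K) = x := ⟨_, rfl⟩
    obtain ⟨w2, hw⟩ : ∃ w2, n * K = w2 := ⟨_, rfl⟩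
    obtain ⟨y, hy⟩ : ∃ y, n * N = y := ⟨_, rfl⟩
    have ha : u + v = w2 := by rw [← hu, ← hv, ← hw, ← Nat.add_mul, Nat.sub_add_cancel hCn]
    have hb : x + w2 = y := by rw [← hx, ← hw, ← hy, ← Nat.mul_add, Nat.sub_add_cancel hKN]
    have hv2 : 2 * N ≤ v := hv ▸ hCK
    rw [hu, hx, hy]
    omega
  have hBadLt : Bad.card < Fintype.card ((BS n × BS n × BS n) → BS n) := by
    have hcard : Fintype.card ((BS n × BS n × BS n) → BS n) = 2 ^ (n * N) := by
      rw [Fintype.card_fun, hIcard, hVcard, ← pow_mul]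
    rw [hcard]
    calc Bad.card ≤ (2 ^ (N - 1)) * (2 ^ N * ((2 ^ (n - C)) ^ K * (2 ^ n) ^ (N - K))) :=
        le_trans hBadBound (Nat.mul_le_mul_right _ hP)
      _ = 2 ^ ((N - 1) + (N + ((n - C) * K + n * (N - K)))) := by
          rw [← pow_mul, ← pow_mul, ← pow_add, ← pow_add, ← pow_add]
      _ < 2 ^ (n * N) := Nat.pow_lt_pow_right (by norm_num) key
  -- pick a good T
  obtain ⟨T0, hT0⟩ : ∃ T0 : (BS n × BS n × BS n) → BS n, T0 ∉ Bad := by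
    by_contra h
    push_neg at h
    have hsub : (univ : Finset ((BS n × BS n × BS n) → BS n)) ⊆ Bad := fun T _ => h T
    have := Finset.card_le_card hsub
    rw [Finset.card_univ] at this
    omega
  refine ⟨fun x y z => T0 (x, y, z), ?_⟩
  intro A B F hA hB hF
  have hmem : (A, B, F) ∈ Acands ×ˢ Acands ×ˢ Fcands := by
    rw [mem_product, mem_product]
    refine ⟨?_, ?_, ?_⟩ <;>
      · rw [Fintype.mem_piFinset]
        intro x
        rw [Fintype.mem_piFinset]
        intro y
        exact mem_filter.mpr ⟨mem_univ _, by
          first | exact hA x y | exact hB x y | exact hF x y⟩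
  have hnotbad : ¬ K ≤ (univ.filter
      (fun w : BS n × BS n × BS n => T0 w ∈ Sfun A B F w)).card := by
    intro hge
    exact hT0 (mem_biUnion.mpr ⟨(A, B, F), hmem, mem_filter.mpr ⟨mem_univ _, hge⟩⟩)
  push_neg at hnotbad
  have hfeq : (Finset.univ.filter (fun w : BS n × BS n × BS n =>
        ∃ a ∈ A w.1 w.2.1, ∃ b ∈ B w.2.1 w.2.2,
          (fun x y z => T0 (x, y, z)) w.1 w.2.1 w.2.2 ∈ F a b)).card
      = (univ.filter (fun w : BS n × BS n × BS n => T0 w ∈ Sfun A B F w)).card := by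
    congr 1
    apply Finset.filter_congr
    intro w _
    simp [hSfun, Finset.mem_biUnion]
  rw [hfeq]
  have hcast : ((univ.filter
      (fun w : BS n × BS n × BS n => T0 w ∈ Sfun A B F w)).card : ℝ) + 1 ≤ (K : ℝ) := by
    exact_mod_cast hnotbad
  have hceil : (K : ℝ) < δ * (N : ℝ) + 1 := by
    rw [hKdef]
    exact Nat.ceil_lt_add_one (by positivity)
  have hNcast : ((N : ℕ) : ℝ) = 2 ^ (3 * n) := by
    rw [hNdef]; push_cast; ring
  rw [← hNcast]
  linarith
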